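/- arXiv:2411.02351 — 3 statements merged into one kernel-verified Lean document; each statement's English description precedes it below -/
import Mathlib

section
/- The torsion subgroup of the elliptic curve y² + y = x³ over ℚ is isomorphic to ℤ/3ℤ. -/
open WeierstrassCurve.Affine

theorem X139_classify (x y : ℚ) (h : y ^ 2 + y = x ^ 3) :
    x = 0 ∧ (y = 0 ∨ y = -1) := by
  set a : ℤ := y.num with ha'
  set c : ℤ := (y.den : ℤ) with hc'
  set b : ℤ := x.num with hb'
  set d : ℤ := (x.den : ℤ) with hd'
  have hc0 : (0:ℤ) < c := by rw [hc']; exact_mod_cast y.pos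
  have hd0 : (0:ℤ) < d := by rw [hd']; exact_mod_cast x.pos
  have hcQ : (c:ℚ) ≠ 0 := by exact_mod_cast hc0.ne'
  have hdQ : (d:ℚ) ≠ 0 := by exact_mod_cast hd0.ne'
  have hya : (a:ℚ) = y * (c:ℚ) := by
    rw [ha', hc']; push_cast
    exact (div_eq_iff (by exact_mod_cast y.den_ne_zero)).mp (Rat.num_div_den y)
  have hxb : (b:ℚ) = x * (d:ℚ) := by
    rw [hb', hd']; push_cast
    exact (div_eq_iff (by exact_mod_cast x.den_ne_zero)).mp (Rat.num_div_den x)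
  -- integer identity
  have keyQ : ((a:ℚ)) * ((a:ℚ) + (c:ℚ)) * (d:ℚ)^3 = (b:ℚ)^3 * (c:ℚ)^2 := by
    rw [hya, hxb]; linear_combination ((c:ℚ)^2 * (d:ℚ)^3) * h
  have key : a * (a + c) * d ^ 3 = b ^ 3 * c ^ 2 := by exact_mod_cast keyQ
  have cop_ac : IsCoprime a c := by
    rw [Int.isCoprime_iff_gcd_eq_one, ha', hc']
    simpa [Int.gcd] using y.reduced
  have cop_bd : IsCoprime b d := by
    rw [Int.isCoprime_iff_gcd_eq_one, hb', hd']
    simpa [Int.gcd] using x.reduced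
  have cop_c_aac : IsCoprime c (a + c) := by
    have := (cop_ac.symm).add_mul_left_right 1
    simpa using this
  have cop : IsCoprime (c ^ 2) (a * (a + c)) :=
    ((cop_ac.symm.mul_right cop_c_aac).pow_left)
  have hcd : c ^ 2 ∣ d ^ 3 := by
    have h1 : c ^ 2 ∣ a * (a + c) * d ^ 3 := ⟨b ^ 3, by linarith [key]⟩
    exact cop.dvd_of_dvd_mul_left h1
  have hdc : d ^ 3 ∣ c ^ 2 := by
    have h1 : d ^ 3 ∣ b ^ 3 * c ^ 2 := ⟨a * (a + c), by linarith [key]⟩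
    exact (cop_bd.symm.pow).dvd_of_dvd_mul_left h1
  have hc2d3 : c ^ 2 = d ^ 3 :=
    Int.dvd_antisymm (by positivity) (by positivity) hcd hdc
  have hab : a * (a + c) = b ^ 3 := by
    have : a * (a + c) * d ^ 3 = b ^ 3 * d ^ 3 := by rw [key, ← hc2d3]
    exact mul_right_cancel₀ (by positivity) this
  have cop_a_ac : IsCoprime a (a + c) := by
    have := cop_ac.add_mul_left_right 1
    simpa [add_comm] using this
  obtain ⟨⟨s, hs⟩, ⟨t, ht⟩⟩ :=
    Int.eq_pow_of_mul_eq_pow_odd cop_a_ac (by decide : Odd 3) hab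
  -- now apply FLT over ℚ
  have flt : FermatLastTheoremWith ℚ 3 := fermatLastTheoremFor_iff_rat.mp fermatLastTheoremThree
  have hy0 : a = 0 ∨ a + c = 0 := by
    by_contra hcon
    push_neg at hcon
    obtain ⟨ha0, hac0⟩ := hcon
    have hs0 : (s:ℚ) ≠ 0 := by
      intro hz
      apply ha0
      rw [hs]
      have : s = 0 := by exact_mod_cast hz
      simp [this]
    have ht0 : (t:ℚ) ≠ 0 := by
      intro hz
      apply hac0
      rw [ht]
      have : t = 0 := by exact_mod_cast hz
      simp [this]
    have hf0 : (c:ℚ) / (d:ℚ) ≠ 0 := div_ne_zero hcQ hdQ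
    apply flt (s:ℚ) ((c:ℚ)/(d:ℚ)) (t:ℚ) hs0 hf0 ht0
    have hd3 : ((d:ℚ)) ^ 3 = (c:ℚ) ^ 2 := by exact_mod_cast hc2d3.symm
    have hcube : ((c:ℚ) / (d:ℚ)) ^ 3 = (c:ℚ) := by
      rw [div_pow, hd3]
      field_simp
    rw [hcube]
    have hsQ : ((s:ℚ)) ^ 3 = (a:ℚ) := by exact_mod_cast hs.symm
    have htQ : ((t:ℚ)) ^ 3 = ((a:ℚ) + (c:ℚ)) := by exact_mod_cast ht.symm
    rw [hsQ, htQ]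
  -- conclude
  have hy : y = 0 ∨ y = -1 := by
    rcases hy0 with h0 | h1
    · left
      exact Rat.num_eq_zero.mp h0
    · right
      have hac : a = -c := by linarith
      have hyc : y * (c:ℚ) = (-1) * (c:ℚ) := by
        rw [← hya, hac]; push_cast; ring
      exact mul_right_cancel₀ hcQ hyc
  refine ⟨?_, hy⟩
  have hx3 : x ^ 3 = 0 := by
    rcases hy with rfl | rfl <;> [skip; skip] <;> linarith [h]
  exact pow_eq_zero_iff (by norm_num) |>.mp hx3

noncomputable section

open WeierstrassCurve WeierstrassCurve.Affine WeierstrassCurve.Affine.Point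

abbrev Wc : WeierstrassCurve.Affine ℚ := (⟨0, 0, 1, 0, 0⟩ : WeierstrassCurve ℚ).toAffine

lemma Wc_a : Wc.a₁ = 0 ∧ Wc.a₂ = 0 ∧ Wc.a₃ = 1 ∧ Wc.a₄ = 0 ∧ Wc.a₆ = 0 :=
  ⟨rfl, rfl, rfl, rfl, rfl⟩

lemma hPns : Wc.Nonsingular 0 0 := by
  rw [nonsingular_iff, equation_iff, Wc_a.1, Wc_a.2.1, Wc_a.2.2.1, Wc_a.2.2.2.1, Wc_a.2.2.2.2]
  norm_num

lemma hQns : Wc.Nonsingular 0 (-1) := by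
  rw [nonsingular_iff, equation_iff, Wc_a.1, Wc_a.2.1, Wc_a.2.2.1, Wc_a.2.2.2.1, Wc_a.2.2.2.2]
  norm_num

def Pp : Wc.Point := Point.some _ _ hPns
def Qq : Wc.Point := Point.some _ _ hQns

lemma some_congr {x₁ y₁ x₂ y₂ : ℚ} (h₁ : Wc.Nonsingular x₁ y₁) (h₂ : Wc.Nonsingular x₂ y₂)
    (hx : x₁ = x₂) (hy : y₁ = y₂) : Point.some _ _ h₁ = Point.some _ _ h₂ := by
  subst hx; subst hy; rfl

lemma negY_eval (x y : ℚ) : Wc.negY x y = -y - 1 := by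
  rw [negY, Wc_a.1, Wc_a.2.2.1]; ring

lemma negPp : -Pp = Qq := by
  rw [Pp, Qq, neg_some]
  exact some_congr _ _ rfl (by rw [negY_eval]; norm_num)

lemma point_classify (R : Wc.Point) : R = 0 ∨ R = Pp ∨ R = Qq := by
  rcases R with _ | @⟨x, y, hR⟩
  · left; rfl
  · have heq : y ^ 2 + y = x ^ 3 := by
      have h1 := ((nonsingular_iff _ _).mp hR).1
      rw [equation_iff, Wc_a.1, Wc_a.2.1, Wc_a.2.2.1, Wc_a.2.2.2.1, Wc_a.2.2.2.2] at h1
      linarith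
    obtain ⟨rfl, hy⟩ := X139_classify x y heq
    rcases hy with rfl | rfl
    · right; left; exact some_congr _ _ rfl rfl
    · right; right; exact some_congr _ _ rfl rfl

lemma PaddP : Pp + Pp = Qq := by
  have hy : (0:ℚ) ≠ Wc.negY 0 0 := by rw [negY_eval]; norm_num
  rw [Pp, add_of_Y_ne hy, Qq]
  refine some_congr _ _ ?_ ?_
  · rw [addX, slope_of_Y_ne rfl hy, negY_eval, Wc_a.1, Wc_a.2.1, Wc_a.2.2.2.1]
    norm_num
  · rw [addY, negAddY, negY_eval, addX, slope_of_Y_ne rfl hy, negY_eval,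
      Wc_a.1, Wc_a.2.1, Wc_a.2.2.2.1]
    norm_num

lemma P3 : (3 : ℤ) • Pp = 0 := by
  have h1 : Pp + Pp + Pp = 0 := by
    rw [PaddP, ← negPp, neg_add_cancel]
  calc (3 : ℤ) • Pp = Pp + Pp + Pp := by
        rw [show (3:ℤ) = 1 + 1 + 1 by norm_num, add_zsmul, add_zsmul, one_zsmul]
    _ = 0 := h1

lemma point_tors (R : Wc.Point) : IsOfFinAddOrder R := by
  rw [isOfFinAddOrder_iff_nsmul_eq_zero]
  refine ⟨3, by norm_num, ?_⟩
  have h3 : ∀ S : Wc.Point, S + S + S = 0 → (3 : ℕ) • S = 0 := by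
    intro S hS
    rw [show (3:ℕ) = 1 + 1 + 1 by norm_num, add_nsmul, add_nsmul, one_nsmul]
    exact hS
  have hPPP : Pp + Pp + Pp = 0 := by rw [PaddP, ← negPp, neg_add_cancel]
  rcases point_classify R with rfl | rfl | rfl
  · exact h3 0 (by rw [add_zero, add_zero])
  · exact h3 _ hPPP
  · apply h3
    rw [← negPp, ← neg_add, ← neg_add, hPPP]
    exact _root_.neg_zero

end

/-- The torsion subgroup of the elliptic curve `y² + y = x³` over `ℚ`
(the modular curve `X₁(3,9)`) is isomorphic to `ℤ/3ℤ`. -/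
theorem X1_3_9_torsion :
    Nonempty ((AddCommGroup.torsion
      (⟨0, 0, 1, 0, 0⟩ : WeierstrassCurve ℚ).toAffine.Point) ≃+ ZMod 3) := by
  classical
  have surj1 : Function.Surjective (AddSubgroup.subtype (AddCommGroup.torsion Wc.Point)) :=
    fun R => ⟨⟨R, point_tors R⟩, rfl⟩
  let e1 : (AddCommGroup.torsion Wc.Point) ≃+ Wc.Point :=
    AddEquiv.ofBijective _ ⟨AddSubgroup.subtype_injective _, surj1⟩
  let f : ZMod 3 →+ Wc.Point :=
    ZMod.lift 3 ⟨zmultiplesHom Wc.Point Pp, by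
      show ((3 : ℕ) : ℤ) • Pp = 0
      exact_mod_cast P3⟩
  have hf : ∀ z : ℤ, f ((z : ZMod 3)) = z • Pp := fun z => ZMod.lift_coe 3 _ z
  have hf1 : f 1 = Pp := by have := hf 1; simpa using this
  have hf2 : f 2 = Qq := by
    have := hf 2
    rw [show ((2:ℤ) : ZMod 3) = 2 by norm_num] at this
    rw [this, two_zsmul, PaddP]
  have hf0 : f 0 = 0 := map_zero f
  have hsurj : Function.Surjective f := by
    intro R
    rcases point_classify R with rfl | rfl | rfl
    · exact ⟨0, hf0⟩
    · exact ⟨1, hf1⟩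
    · exact ⟨2, hf2⟩
  have hinj : Function.Injective f := by
    rw [injective_iff_map_eq_zero]
    intro z hz
    rcases (by decide : ∀ w : ZMod 3, w = 0 ∨ w = 1 ∨ w = 2) z with rfl | rfl | rfl
    · rfl
    · rw [hf1] at hz
      exact absurd hz (Point.some_ne_zero hPns)
    · rw [hf2] at hz
      exact absurd hz (Point.some_ne_zero hQns)
  let e2 := AddEquiv.ofBijective f ⟨hinj, hsurj⟩
  exact ⟨e1.trans e2.symm⟩
end

section
/- The polynomial x⁴ - x³ - x² + x + 1 is irreducible over ℚ, and the number field ℚ[x]/(x⁴ - x³ - x² + x + 1) has discriminant 117. -/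
open Polynomial

set_option maxHeartbeats 1600000


private lemma two_eq_zero : (2 : (ZMod 2)[X]) = 0 := by
  rw [← map_ofNat (Polynomial.C (R := ZMod 2)) 2, show (2 : ZMod 2) = 0 from rfl, map_zero]

private lemma quad_classify (g : (ZMod 2)[X]) (hm : g.Monic) (hd : g.natDegree = 2)
    (h0 : g.eval 0 ≠ 0) (h1 : g.eval 1 ≠ 0) : g = X ^ 2 + X + 1 := by
  have hne : ∀ x : ZMod 2, x ≠ 0 → x = 1 := by decide
  have hc2 : g.coeff 2 = 1 := by have := hm.coeff_natDegree; rwa [hd] at this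
  have hc0 : g.coeff 0 = 1 := by
    have : g.coeff 0 ≠ 0 := by rwa [coeff_zero_eq_eval_zero]
    exact hne _ this
  have hrep : g = X ^ 2 + C (g.coeff 1) * X + C (g.coeff 0) := by
    ext n
    rcases n with _ | _ | _ | n
    · simp
    · simp
    · simpa using hc2
    · have hl : g.coeff (n + 3) = 0 := coeff_eq_zero_of_natDegree_lt (by omega)
      rw [hl]
      simp [coeff_X_pow]
  have hc1 : g.coeff 1 = 1 := by
    apply hne
    intro hc
    rw [hrep, hc, hc0] at h1
    exact h1 (by simp; decide)
  rw [hrep, hc1, hc0]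
  simp

private lemma f2_irred : Irreducible (X ^ 4 + X ^ 3 + X ^ 2 + X + 1 : (ZMod 2)[X]) := by
  set f2 : (ZMod 2)[X] := X ^ 4 + X ^ 3 + X ^ 2 + X + 1 with hf2
  have hne : ∀ x : ZMod 2, x ≠ 0 → x = 1 := by decide
  have hmon : f2.Monic := by
    unfold f2; monicity!
  have hdeg : f2.natDegree = 4 := by unfold f2; compute_degree!
  have hroots : ∀ x : ZMod 2, f2.eval x ≠ 0 := by
    intro x
    have : x = 0 ∨ x = 1 := (by decide : ∀ y : ZMod 2, y = 0 ∨ y = 1) x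
    rcases this with rfl | rfl <;> simp [hf2] <;> decide
  constructor
  · exact not_isUnit_of_natDegree_pos _ (by omega)
  · intro g h hf
    by_contra hcon
    push_neg at hcon
    obtain ⟨hgu, hhu⟩ := hcon
    have hg0 : g ≠ 0 := by rintro rfl; simp at hf; exact hmon.ne_zero (by simpa using hf)
    have hh0 : h ≠ 0 := by rintro rfl; simp at hf; exact hmon.ne_zero (by simpa using hf)
    have hgm : g.Monic := by
      have := hne _ (leadingCoeff_ne_zero.mpr hg0); exact this
    have hhm : h.Monic := by
      have := hne _ (leadingCoeff_ne_zero.mpr hh0); exact this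
    have hsum : g.natDegree + h.natDegree = 4 := by
      rw [← natDegree_mul hg0 hh0, ← hf, hdeg]
    have hg1 : 1 ≤ g.natDegree := by
      rcases Nat.eq_zero_or_pos g.natDegree with h0 | h0
      · exact absurd (hgm.natDegree_eq_zero.mp h0 ▸ isUnit_one) hgu
      · omega
    have hh1 : 1 ≤ h.natDegree := by
      rcases Nat.eq_zero_or_pos h.natDegree with h0 | h0
      · exact absurd (hhm.natDegree_eq_zero.mp h0 ▸ isUnit_one) hhu
      · omega
    have groot : ∀ x : ZMod 2, g.eval x ≠ 0 := by
      intro x hx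
      exact hroots x (by rw [hf, eval_mul, hx, zero_mul])
    have hroot : ∀ x : ZMod 2, h.eval x ≠ 0 := by
      intro x hx
      exact hroots x (by rw [hf, eval_mul, hx, mul_zero])
    have deg1 : ∀ p : (ZMod 2)[X], p.Monic → p.natDegree = 1 → (∀ x, p.eval x ≠ 0) → False := by
      intro p hpm hpd hpr
      have := hpm.eq_X_add_C hpd
      apply hpr (p.coeff 0)
      rw [this]
      simp
      exact (by decide : ∀ x : ZMod 2, x + x = 0) _
    have hg3 : g.natDegree ≤ 3 := by omega
    interval_cases hgd : g.natDegree
    · exact deg1 g hgm hgd groot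
    · -- g deg 2, h deg 2
      have hhd : h.natDegree = 2 := by omega
      rw [quad_classify g hgm hgd (groot 0) (groot 1),
          quad_classify h hhm hhd (hroot 0) (hroot 1)] at hf
      have : (X ^ 2 + X + 1 : (ZMod 2)[X]) * (X ^ 2 + X + 1) = X ^ 4 + X ^ 2 + 1 := by
        linear_combination (X ^ 3 + X ^ 2 + X : (ZMod 2)[X]) * two_eq_zero
      rw [this] at hf
      have := congrArg (fun p => coeff p 3) hf
      simp [hf2, coeff_X_pow, coeff_X] at this
    · exact deg1 h hhm (by omega) hroot

private lemma fZ_monic : (X ^ 4 - X ^ 3 - X ^ 2 + X + 1 : ℤ[X]).Monic := by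
  monicity!

private lemma fZ_irred : Irreducible (X ^ 4 - X ^ 3 - X ^ 2 + X + 1 : ℤ[X]) := by
  apply fZ_monic.irreducible_of_irreducible_map (Int.castRingHom (ZMod 2))
  have hmap : (X ^ 4 - X ^ 3 - X ^ 2 + X + 1 : ℤ[X]).map (Int.castRingHom (ZMod 2)) =
      X ^ 4 + X ^ 3 + X ^ 2 + X + 1 := by
    simp only [Polynomial.map_add, Polynomial.map_sub, Polynomial.map_pow, Polynomial.map_X,
      Polynomial.map_one]
    linear_combination (-(X ^ 3 + X ^ 2) : (ZMod 2)[X]) * two_eq_zero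
  rw [hmap]
  exact f2_irred

private lemma fQ_irred : Irreducible (X ^ 4 - X ^ 3 - X ^ 2 + X + 1 : ℚ[X]) := by
  have hmap : (X ^ 4 - X ^ 3 - X ^ 2 + X + 1 : ℤ[X]).map (Int.castRingHom ℚ) =
      (X ^ 4 - X ^ 3 - X ^ 2 + X + 1 : ℚ[X]) := by
    simp only [Polynomial.map_add, Polynomial.map_sub, Polynomial.map_pow, Polynomial.map_X,
      Polynomial.map_one]
  rw [← hmap]
  exact (Polynomial.IsPrimitive.Int.irreducible_iff_irreducible_map_cast fZ_monic.isPrimitive).mp fZ_irred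


open Matrix in
/-- The polynomial `x⁴ - x³ - x² + x + 1` is irreducible over `ℚ`, and the quartic
number field `ℚ[x]/(x⁴ - x³ - x² + x + 1)` has discriminant `117`. -/
theorem quartic_field_disc_117 :
    Irreducible (X ^ 4 - X ^ 3 - X ^ 2 + X + 1 : ℚ[X]) ∧
      ∀ (K : Type) [Field K] [NumberField K] (a : K),
        aeval a (X ^ 4 - X ^ 3 - X ^ 2 + X + 1 : ℚ[X]) = 0 →
        Algebra.adjoin ℚ {a} = ⊤ →
        NumberField.discr K = 117 := by
  refine ⟨fQ_irred, ?_⟩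
  intro K _ _ a hroot htop
  have fQ_irred := fQ_irred
  have hmonic : (X ^ 4 - X ^ 3 - X ^ 2 + X + 1 : ℚ[X]).Monic := by monicity!
  have hmin : minpoly ℚ a = X ^ 4 - X ^ 3 - X ^ 2 + X + 1 :=
    (minpoly.eq_of_irreducible_of_monic fQ_irred hroot hmonic).symm
  have hint : IsIntegral ℚ a := ⟨_, hmonic, hroot⟩
  have ha4 : a ^ 4 = a ^ 3 + a ^ 2 - a - 1 := by
    have h := hroot
    simp only [map_add, map_sub, map_pow, aeval_X, aeval_one] at h
    linear_combination h
  let pb : PowerBasis ℚ K := (Algebra.adjoin.powerBasis hint).map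
    ((Subalgebra.equivOfEq _ _ htop).trans Subalgebra.topEquiv)
  have hgen : pb.gen = a := rfl
  have hdim : pb.dim = 4 := by
    show (minpoly ℚ a).natDegree = 4
    rw [hmin]
    compute_degree!
  let b : Module.Basis (Fin 4) ℚ K := pb.basis.reindex (finCongr hdim)
  have hb : ∀ i : Fin 4, b i = a ^ (i : ℕ) := by
    intro i
    simp [b, Module.Basis.reindex_apply, pb.basis_eq_pow, hgen]
  have hv : ((0:Fin 4):ℕ) = 0 ∧ ((1:Fin 4):ℕ) = 1 ∧ ((2:Fin 4):ℕ) = 2 ∧ ((3:Fin 4):ℕ) = 3 :=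
    ⟨rfl, rfl, rfl, rfl⟩
  have e0 : a * b 0 = b 1 := by simp only [hb, hv.1, hv.2.1]; ring
  have e1 : a * b 1 = b 2 := by simp only [hb, hv.2.1, hv.2.2.1]; ring
  have e2 : a * b 2 = b 3 := by simp only [hb, hv.2.2.1, hv.2.2.2]; ring
  have e3 : a * b 3 = b 3 + b 2 - b 1 - b 0 := by
    simp only [hb, hv.1, hv.2.1, hv.2.2.1, hv.2.2.2]
    linear_combination ha4
  have hC : Algebra.leftMulMatrix b a =
      !![0,0,0,-1; 1,0,0,-1; 0,1,0,1; 0,0,1,1] := by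
    ext i j
    rw [Algebra.leftMulMatrix_eq_repr_mul]
    fin_cases j <;> fin_cases i <;>
      simp [e0, e1, e2, e3, Module.Basis.repr_self, Finsupp.single_apply, Matrix.vecHead, Matrix.vecTail]
  have hrk : Module.finrank ℚ K = 4 := by rw [pb.finrank]; exact hdim
  have hdisc_b : Algebra.discr ℚ (b : Fin 4 → K) = 117 := by
    have h1 : Algebra.discr ℚ (b : Fin 4 → K) = Algebra.discr ℚ pb.basis := by
      rw [show (b : Fin 4 → K) = pb.basis ∘ (finCongr hdim).symm from pb.basis.coe_reindex _]
      exact Algebra.discr_reindex ℚ pb.basis (finCongr hdim)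
    have hder : aeval a (derivative (X ^ 4 - X ^ 3 - X ^ 2 + X + 1 : ℚ[X])) =
        4 * a ^ 3 - 3 * a ^ 2 - 2 * a + 1 := by
      simp; ring
    have ha5 : a ^ 5 = 2 * a ^ 3 - 2 * a - 1 := by linear_combination (a + 1) * ha4
    have ha6 : a ^ 6 = 2 * a ^ 3 - 3 * a - 2 := by linear_combination (a ^ 2 + a + 2) * ha4
    have d0 : (4 * a ^ 3 - 3 * a ^ 2 - 2 * a + 1) * b 0 =
        b 0 - (2 : ℚ) • b 1 - (3 : ℚ) • b 2 + (4 : ℚ) • b 3 := by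
      simp only [hb, hv.1, hv.2.1, hv.2.2.1, hv.2.2.2, Algebra.smul_def, map_ofNat, map_neg]
      ring
    have d1 : (4 * a ^ 3 - 3 * a ^ 2 - 2 * a + 1) * b 1 =
        -(4 : ℚ) • b 0 - (3 : ℚ) • b 1 + (2 : ℚ) • b 2 + b 3 := by
      simp only [hb, hv.1, hv.2.1, hv.2.2.1, hv.2.2.2, Algebra.smul_def, map_ofNat, map_neg]
      linear_combination 4 * ha4
    have d2 : (4 * a ^ 3 - 3 * a ^ 2 - 2 * a + 1) * b 2 =
        -b 0 - (5 : ℚ) • b 1 - (2 : ℚ) • b 2 + (3 : ℚ) • b 3 := by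
      simp only [hb, hv.1, hv.2.1, hv.2.2.1, hv.2.2.2, Algebra.smul_def, map_ofNat, map_neg]
      linear_combination 4 * ha5 - 3 * ha4
    have d3 : (4 * a ^ 3 - 3 * a ^ 2 - 2 * a + 1) * b 3 =
        -(3 : ℚ) • b 0 - (4 : ℚ) • b 1 - (2 : ℚ) • b 2 + b 3 := by
      simp only [hb, hv.1, hv.2.1, hv.2.2.1, hv.2.2.2, Algebra.smul_def, map_ofNat, map_neg]
      linear_combination 4 * ha6 - 3 * ha5 - 2 * ha4
    have hMfull : Algebra.leftMulMatrix b (4 * a ^ 3 - 3 * a ^ 2 - 2 * a + 1) =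
        !![1,-4,-1,-3; -2,-3,-5,-4; -3,2,-2,-2; 4,1,3,1] := by
      ext i j
      rw [Algebra.leftMulMatrix_eq_repr_mul]
      fin_cases j <;> fin_cases i <;>
        simp [d0, d1, d2, d3, Module.Basis.repr_self, Finsupp.single_apply,
          Matrix.vecHead, Matrix.vecTail]
    have hnorm : Algebra.norm ℚ (4 * a ^ 3 - 3 * a ^ 2 - 2 * a + 1) = 117 := by
      rw [Algebra.norm_eq_matrix_det b, hMfull]
      rw [Matrix.det_succ_row_zero]
      simp [Fin.sum_univ_succ, Matrix.det_fin_three, Fin.succAbove, Matrix.submatrix]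
      norm_num
    rw [h1, Algebra.discr_powerBasis_eq_norm, hgen, hmin, hrk, hder, hnorm]
    norm_num
  have haZ : IsIntegral ℤ a := by
    refine ⟨X ^ 4 - X ^ 3 - X ^ 2 + X + 1, by monicity!, ?_⟩
    simp only [eval₂_add, eval₂_sub, eval₂_pow, eval₂_X, eval₂_one]
    linear_combination ha4
  have hbint : ∀ i : Fin 4, IsIntegral ℤ (b i) := fun i => by rw [hb]; exact haZ.pow _
  have e : Module.Free.ChooseBasisIndex ℤ (NumberField.RingOfIntegers K) ≃ Fin 4 :=
    Fintype.equivFinOfCardEq (by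
      rw [← Module.finrank_eq_card_chooseBasisIndex, NumberField.RingOfIntegers.rank, hrk])
  set ib : Module.Basis (Fin 4) ℚ K := (NumberField.integralBasis K).reindex e with hib
  have hibd : Algebra.discr ℚ (ib : Fin 4 → K) = (NumberField.discr K : ℚ) := by
    rw [hib, Module.Basis.coe_reindex, Algebra.discr_reindex, NumberField.coe_discr]
  set P : Matrix (Fin 4) (Fin 4) ℤ :=
    Matrix.of (fun j i => (NumberField.RingOfIntegers.basis K).repr ⟨b i, hbint i⟩ (e.symm j))
    with hP
  set Pq : Matrix (Fin 4) (Fin 4) ℚ := P.map (algebraMap ℤ ℚ) with hPq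
  have hvec : (b : Fin 4 → K) = (ib : Fin 4 → K) ᵥ* Pq.map (algebraMap ℚ K) := by
    funext i
    have hrepr : ∀ j, ib.repr (b i) j = Pq j i := by
      intro j
      rw [hib, Module.Basis.repr_reindex_apply]
      have hcoe : b i = algebraMap (NumberField.RingOfIntegers K) K ⟨b i, hbint i⟩ := rfl
      rw [hcoe]; refine (NumberField.integralBasis_repr_apply (K := K) _ _).trans ?_
      rfl
    calc b i = ∑ j, ib.repr (b i) j • ib j := (ib.sum_repr (b i)).symm
    _ = ∑ j, ib j * (Pq.map (algebraMap ℚ K)) j i := by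
        refine Finset.sum_congr rfl fun j _ => ?_
        rw [hrepr j, Algebra.smul_def, mul_comm, Matrix.map_apply]
    _ = ((ib : Fin 4 → K) ᵥ* Pq.map (algebraMap ℚ K)) i := by
        simp [Matrix.vecMul, dotProduct]
  have key : (117 : ℚ) = Pq.det ^ 2 * (NumberField.discr K : ℚ) := by
    rw [← hdisc_b, hvec, Algebra.discr_of_matrix_vecMul, hibd]
  have hPdet : Pq.det = algebraMap ℤ ℚ P.det := by
    rw [hPq, ← RingHom.mapMatrix_apply, ← RingHom.map_det]
  rw [hPdet] at key
  rw [eq_intCast] at key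
  have keyZ : (117 : ℤ) = P.det ^ 2 * NumberField.discr K := by exact_mod_cast key
  have habs := NumberField.abs_discr_ge (K := K) (by rw [hrk]; norm_num)
  rw [hrk] at habs
  have hπ := Real.pi_gt_d6
  have hpi2 : (9.8696 : ℝ) ≤ Real.pi ^ 2 := by nlinarith
  have hpi4 : (97.40 : ℝ) ≤ Real.pi ^ 4 := by nlinarith
  have h135 : (13.5 : ℝ) ≤ ((|NumberField.discr K| : ℤ) : ℝ) :=
    le_trans (by nlinarith [hpi4]) habs
  have h13 : (13 : ℤ) < |NumberField.discr K| := by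
    exact_mod_cast lt_of_lt_of_le (by norm_num : ((13 : ℤ) : ℝ) < 13.5) h135
  set D := NumberField.discr K with hD
  set m := P.det with hm
  have hDpos : 0 < D := by nlinarith [sq_nonneg m]

  rw [abs_of_pos hDpos] at h13
  have hm2 : m ^ 2 ≤ 8 := by nlinarith
  have hml : -3 ≤ m := by nlinarith
  have hmr : m ≤ 3 := by nlinarith
  interval_cases m <;> norm_num at keyZ <;> omega
end

section
/- The set of rational points on the elliptic curve y² = x³ - x consists exactly of the point at infinity and the three 2-torsion points (0,0), (1,0), (-1,0). -/
lemma pos_sq_of_coprime {a b c : ℤ} (h : IsCoprime a b) (heq : a * b = c ^ 2)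
    (ha : 0 < a) : ∃ r : ℤ, 0 < r ∧ a = r ^ 2 := by
  obtain ⟨a0, h0 | h0⟩ := Int.sq_of_isCoprime h heq
  · refine ⟨|a0|, ?_, by rw [h0, sq_abs]⟩
    rcases eq_or_ne a0 0 with rfl | hne
    · simp [h0] at ha
    · exact abs_pos.mpr hne
  · nlinarith [sq_nonneg a0]

lemma coprime_of_sqs {r s : ℤ} (h : IsCoprime (r ^ 2) (s ^ 2)) : IsCoprime r s :=
  ((IsCoprime.pow_left_iff two_pos).trans (IsCoprime.pow_right_iff two_pos)).mp h

-- descent core K : from a² = 4u⁴ + v⁴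
lemma descent_K {a u v : ℤ} (ha : 0 < a) (hu : 0 < u) (hv : 0 < v)
    (hav : IsCoprime a (v ^ 2)) (heq : a ^ 2 = 4 * u ^ 4 + v ^ 4) :
    ∃ a' b' c' : ℤ, 0 < a' ∧ 0 < b' ∧ 0 < c' ∧ IsCoprime a' b' ∧
      a' ^ 4 - b' ^ 4 = c' ^ 2 ∧ a' < a := by
  have hvodd : Odd v := by
    rcases Int.even_or_odd v with he | ho
    · exfalso
      obtain ⟨k, hk⟩ := he
      have h2a : (2 : ℤ) ∣ a := by
        refine Int.prime_two.dvd_of_dvd_pow (n := 2) ?_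
        exact ⟨2 * u ^ 4 + 8 * k ^ 4, by rw [heq, hk]; ring⟩
      have h2v : (2 : ℤ) ∣ v ^ 2 := ⟨2 * k ^ 2, by rw [hk]; ring⟩
      exact (Int.prime_two.not_unit) (hav.isUnit_of_dvd' h2a h2v)
    · exact ho
  have haodd : Odd a := by
    rcases Int.even_or_odd a with he | ho
    · exfalso
      obtain ⟨k, hk⟩ := he
      obtain ⟨m, hm⟩ := hvodd
      have key : ∀ i m u : ZMod 8, (2*i)^2 ≠ 4*u^4 + (2*m+1)^4 := by decide
      have hc : ((a : ZMod 8))^2 = 4*(u:ZMod 8)^4 + (v:ZMod 8)^4 := by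
        exact_mod_cast congrArg (fun z : ℤ => (z : ZMod 8)) heq
      rw [show ((a:ℤ) : ZMod 8) = 2*(k:ℤ) from by rw [hk]; push_cast; ring,
          show ((v:ℤ) : ZMod 8) = 2*(m:ℤ)+1 from by rw [hm]; push_cast; ring] at hc
      push_cast at hc
      exact key _ _ _ hc
    · exact ho
  have hva : v ^ 2 < a := by
    by_contra hcon
    push_neg at hcon
    nlinarith [mul_nonneg (by linarith : (0:ℤ) ≤ v^2 - a) (by positivity : (0:ℤ) ≤ v^2 + a),
      pow_pos hu 4]
  obtain ⟨k, hk⟩ : ∃ k, a - v ^ 2 = 2 * k := by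
    obtain ⟨i, hi⟩ := haodd; obtain ⟨j, hj⟩ := hvodd
    exact ⟨i - 2*j^2 - 2*j, by rw [hi, hj]; ring⟩
  obtain ⟨l, hl⟩ : ∃ l, a + v ^ 2 = 2 * l := by
    obtain ⟨i, hi⟩ := haodd; obtain ⟨j, hj⟩ := hvodd
    exact ⟨i + 2*j^2 + 2*j + 1, by rw [hi, hj]; ring⟩
  have hk0 : 0 < k := by nlinarith
  have hl0 : 0 < l := by nlinarith
  have hsum : k + l = a := by linarith
  have hdiff : l - k = v ^ 2 := by linarith
  have hkl : k * l = (u ^ 2) ^ 2 := by nlinarith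
  have hcopkl : IsCoprime k l := by
    obtain ⟨U, V, hUV⟩ := hav
    exact ⟨U - V, U + V, by linear_combination hUV + U * hsum + V * hdiff⟩
  obtain ⟨t, ht0, ht⟩ := pos_sq_of_coprime hcopkl hkl hk0
  obtain ⟨w, hw0, hw⟩ := pos_sq_of_coprime (hcopkl.symm) (by rw [mul_comm]; exact hkl) hl0
  have hcoptw : IsCoprime t w := coprime_of_sqs (by rw [← ht, ← hw]; exact hcopkl)
  have htw : t * w = u ^ 2 := by
    have h1 : (t * w) ^ 2 = (u ^ 2) ^ 2 := by rw [mul_pow, ← ht, ← hw]; exact hkl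
    have h2 : 0 < t * w := mul_pos ht0 hw0
    nlinarith [pow_pos hu 2]
  obtain ⟨al, hal0, hal⟩ := pos_sq_of_coprime hcoptw htw ht0
  obtain ⟨be, hbe0, hbe⟩ := pos_sq_of_coprime hcoptw.symm (by rw [mul_comm]; exact htw) hw0
  refine ⟨be, al, v, hbe0, hal0, hv, ?_, ?_, ?_⟩
  · exact (coprime_of_sqs (by rw [← hal, ← hbe]; exact hcoptw)).symm
  · have h1 : l - k = v ^ 2 := hdiff
    rw [ht, hw, hal, hbe] at h1
    linear_combination h1
  · have hbe1 : (1:ℤ) ≤ be := hbe0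
    have h4 : be ≤ be ^ 4 := le_self_pow₀ hbe1 (by norm_num)
    have hla : l < a := by nlinarith
    have : be ^ 4 = l := by rw [hw, hbe]; ring
    linarith

lemma descent_K2 {a X Y b1 : ℤ} (ha : 0 < a) (hX : 0 < X) (hY : 0 < Y)
    (hcop : IsCoprime X Y) (hXe : Even X) (hXY : X * Y = 2 * b1 ^ 2)
    (heq : a ^ 2 = X ^ 2 + Y ^ 2) :
    ∃ a' b' c' : ℤ, 0 < a' ∧ 0 < b' ∧ 0 < c' ∧ IsCoprime a' b' ∧
      a' ^ 4 - b' ^ 4 = c' ^ 2 ∧ a' < a := by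
  obtain ⟨X1, hX1⟩ := hXe
  have hX1' : X = 2 * X1 := by rw [hX1]; ring
  have hX10 : 0 < X1 := by linarith
  have hX1Y : X1 * Y = b1 ^ 2 := by
    have h2 : 2 * (X1 * Y) = 2 * b1 ^ 2 := by rw [← hXY, hX1']; ring
    linarith
  have hcop1 : IsCoprime X1 Y := hcop.of_isCoprime_of_dvd_left ⟨2, by rw [hX1']; ring⟩
  obtain ⟨u, hu0, hu⟩ := pos_sq_of_coprime hcop1 hX1Y hX10
  obtain ⟨v, hv0, hv⟩ := pos_sq_of_coprime hcop1.symm (by rw [mul_comm]; exact hX1Y) hY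
  have heq' : a ^ 2 = 4 * u ^ 4 + v ^ 4 := by rw [heq, hX1', hu, hv]; ring
  have hav : IsCoprime a (v ^ 2) := by
    rw [← hv, Int.isCoprime_iff_gcd_eq_one]
    by_contra hg
    have hg1 : (Int.gcd a Y : ℤ) ∣ a := Int.gcd_dvd_left a Y
    have hg2 : (Int.gcd a Y : ℤ) ∣ Y := Int.gcd_dvd_right a Y
    have hgX2 : ((Int.gcd a Y : ℤ)) ^ 2 ∣ X ^ 2 := by
      have hX2 : X ^ 2 = a ^ 2 - Y ^ 2 := by linarith
      rw [hX2]
      exact dvd_sub (pow_dvd_pow_of_dvd hg1 2) (pow_dvd_pow_of_dvd hg2 2)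
    have hgX : ((Int.gcd a Y : ℤ)) ∣ X := (Int.pow_dvd_pow_iff two_ne_zero).mp hgX2
    have hunit := hcop.isUnit_of_dvd' hgX hg2
    rw [Int.isUnit_iff] at hunit
    rcases hunit with h1 | h1 <;> omega
  exact descent_K ha hu0 hv0 hav heq'

lemma descent_step {a b c : ℤ} (ha : 0 < a) (hb : 0 < b) (hc : 0 < c)
    (hcop : IsCoprime a b) (heq : a ^ 4 - b ^ 4 = c ^ 2) :
    ∃ a' b' c' : ℤ, 0 < a' ∧ 0 < b' ∧ 0 < c' ∧ IsCoprime a' b' ∧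
      a' ^ 4 - b' ^ 4 = c' ^ 2 ∧ a' < a := by
  have hba : b < a := by
    by_contra hcon
    push_neg at hcon
    have h4 : a ^ 4 ≤ b ^ 4 := pow_le_pow_left₀ ha.le hcon 4
    nlinarith [pow_pos hc 2]
  have haodd : Odd a := by
    rcases Int.even_or_odd a with he | ho
    · exfalso
      have hbodd : Odd b := by
        rcases Int.even_or_odd b with he' | ho'
        · exfalso
          obtain ⟨i, hi⟩ := he; obtain ⟨j, hj⟩ := he'
          have hunit : IsUnit (2 : ℤ) := hcop.isUnit_of_dvd' ⟨i, by omega⟩ ⟨j, by omega⟩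
          rw [Int.isUnit_iff] at hunit
          omega
        · exact ho'
      obtain ⟨i, hi⟩ := he; obtain ⟨j, hj⟩ := hbodd
      have key : ∀ i j c : ZMod 8, (2*i)^4 - (2*j+1)^4 ≠ c^2 := by decide
      have hcast : ((a : ZMod 8))^4 - (b : ZMod 8)^4 = (c : ZMod 8)^2 := by
        exact_mod_cast congrArg (fun z : ℤ => (z : ZMod 8)) heq
      rw [show ((a:ℤ) : ZMod 8) = 2*(i:ℤ) from by rw [hi]; push_cast; ring,
          show ((b:ℤ) : ZMod 8) = 2*(j:ℤ)+1 from by rw [hj]; push_cast; ring] at hcast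
      exact key _ _ _ hcast
    · exact ho
  rcases Int.even_or_odd b with hbe | hbodd
  · -- b even
    obtain ⟨j, hj⟩ := hbe
    have hp0 : 0 < a ^ 2 + b ^ 2 := by positivity
    have hq0 : 0 < a ^ 2 - b ^ 2 := by nlinarith
    have hpq : (a ^ 2 + b ^ 2) * (a ^ 2 - b ^ 2) = c ^ 2 := by linear_combination heq
    obtain ⟨e, he⟩ : ∃ e, a ^ 2 + b ^ 2 = 2 * e + 1 := by
      obtain ⟨i, hi⟩ := haodd
      exact ⟨2*i^2 + 2*i + 2*j^2, by rw [hi, hj]; ring⟩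
    obtain ⟨e2, he2⟩ : ∃ e2, a ^ 2 - b ^ 2 = 2 * e2 + 1 := by
      obtain ⟨i, hi⟩ := haodd
      exact ⟨2*i^2 + 2*i - 2*j^2, by rw [hi, hj]; ring⟩
    have hcoppq : IsCoprime (a ^ 2 + b ^ 2) (a ^ 2 - b ^ 2) := by
      obtain ⟨U, V, hUV⟩ := hcop.pow (n := 2) (m := 2)
      exact ⟨1 - e * (U + V), -(e * (U - V)), by linear_combination he - 2 * e * hUV⟩
    obtain ⟨r, hr0, hr⟩ := pos_sq_of_coprime hcoppq hpq hp0
    obtain ⟨s, hs0, hs⟩ := pos_sq_of_coprime hcoppq.symm (by rw [mul_comm]; exact hpq) hq0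
    have hcoprs : IsCoprime r s := coprime_of_sqs (by rw [← hr, ← hs]; exact hcoppq)
    have hrodd : Odd r := by
      have : Odd (r ^ 2) := by rw [← hr]; exact ⟨e, he⟩
      exact (Int.odd_pow.mp this).resolve_right (by norm_num)
    have hsodd : Odd s := by
      have : Odd (s ^ 2) := by rw [← hs]; exact ⟨e2, he2⟩
      exact (Int.odd_pow.mp this).resolve_right (by norm_num)
    have hrs : s < r := by nlinarith
    obtain ⟨i1, hi1⟩ := hrodd
    obtain ⟨j1, hj1⟩ := hsodd
    obtain ⟨X, hXd⟩ : ∃ X, r + s = 2 * X := ⟨i1 + j1 + 1, by omega⟩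
    obtain ⟨Y, hYd⟩ : ∃ Y, r - s = 2 * Y := ⟨i1 - j1, by omega⟩
    have hXsum : X + Y = r := by omega
    have hXdiff : X - Y = s := by omega
    have hX0 : 0 < X := by omega
    have hY0 : 0 < Y := by omega
    have hXY : X * Y = 2 * j ^ 2 := by
      have h5 : r ^ 2 - s ^ 2 = 2 * b ^ 2 := by rw [← hr, ← hs]; ring
      have h6 : r ^ 2 - s ^ 2 = 4 * (X * Y) := by
        rw [← hXsum, ← hXdiff]; ring
      have hb2 : b ^ 2 = 4 * j ^ 2 := by rw [hj]; ring
      linarith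
    have hXYsq : a ^ 2 = X ^ 2 + Y ^ 2 := by
      have h5 : r ^ 2 + s ^ 2 = 2 * a ^ 2 := by rw [← hr, ← hs]; ring
      have h6 : r ^ 2 + s ^ 2 = 2 * (X ^ 2 + Y ^ 2) := by rw [← hXsum, ← hXdiff]; ring
      linarith
    have hcopXY : IsCoprime X Y := by
      obtain ⟨U, V, hUV⟩ := hcoprs
      exact ⟨U + V, U - V, by linear_combination hUV + U * hXsum + V * hXdiff⟩
    rcases Int.even_or_odd X with hXe | hXo
    · exact descent_K2 ha hX0 hY0 hcopXY hXe hXY hXYsq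
    · have hYe : Even Y := by
        rcases Int.even_or_odd Y with hYe | hYo
        · exact hYe
        · exfalso
          obtain ⟨i2, hi2⟩ := hXo; obtain ⟨i3, hi3⟩ := hYo
          omega
      exact descent_K2 ha hY0 hX0 hcopXY.symm hYe (by rw [mul_comm]; exact hXY)
        (by rw [hXYsq]; ring)
  · -- b odd
    obtain ⟨j, hj⟩ := hbodd
    obtain ⟨i, hi⟩ := haodd
    obtain ⟨p, hp⟩ : ∃ p, a ^ 2 + b ^ 2 = 2 * p := ⟨2*i^2+2*i+2*j^2+2*j+1, by rw [hi, hj]; ring⟩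
    obtain ⟨q, hq⟩ : ∃ q, a ^ 2 - b ^ 2 = 2 * q := ⟨2*i^2+2*i-2*j^2-2*j, by rw [hi, hj]; ring⟩
    have hp0 : 0 < p := by nlinarith
    have hq0 : 0 < q := by nlinarith
    have hce : Even c := by
      rcases Int.even_or_odd c with he' | ho'
      · exact he'
      · exfalso
        have h4 : c ^ 2 = 2 * (p * q) + 2 * (p * q) := by
          have h5 : (2*p) * (2*q) = c ^ 2 := by rw [← hp, ← hq]; linear_combination heq
          linarith
        exact (Int.not_odd_iff_even.mpr ⟨2 * (p * q), h4⟩) (ho'.pow)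
    obtain ⟨C, hC⟩ := hce
    have hCpq : p * q = C ^ 2 := by
      have h4 : (2*p) * (2*q) = (C + C) ^ 2 := by rw [← hp, ← hq, ← hC]; linear_combination heq
      nlinarith
    have hsum : p + q = a ^ 2 := by linarith
    have hdiff : p - q = b ^ 2 := by linarith
    have hcoppq : IsCoprime p q := by
      obtain ⟨U, V, hUV⟩ := hcop.pow (n := 2) (m := 2)
      exact ⟨U + V, U - V, by linear_combination hUV + U * hsum + V * hdiff⟩
    obtain ⟨r, hr0, hr⟩ := pos_sq_of_coprime hcoppq hCpq hp0
    obtain ⟨s, hs0, hs⟩ := pos_sq_of_coprime hcoppq.symm (by rw [mul_comm]; exact hCpq) hq0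
    refine ⟨r, s, a * b, hr0, hs0, mul_pos ha hb, ?_, ?_, ?_⟩
    · exact coprime_of_sqs (by rw [← hr, ← hs]; exact hcoppq)
    · linear_combination (-(p + r^2))*hr + (q + s^2)*hs + (p - q)*hsum + a^2*hdiff
    · by_contra hcon
      push_neg at hcon
      have h4 : a ^ 2 ≤ r ^ 2 := pow_le_pow_left₀ ha.le hcon 2
      nlinarith [sq_nonneg b]

lemma no_flt4m_aux : ∀ (N : ℕ) (a b c : ℤ), a.natAbs = N → 0 < a → 0 < b → 0 < c →
    IsCoprime a b → a ^ 4 - b ^ 4 ≠ c ^ 2 := by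
  intro N
  induction N using Nat.strong_induction_on with
  | _ N ih =>
    intro a b c hN ha hb hc hcop heq
    obtain ⟨a', b', c', ha', hb', hc', hcop', heq', hlt⟩ := descent_step ha hb hc hcop heq
    have hNlt : a'.natAbs < N := by
      rw [← hN]
      omega
    exact ih a'.natAbs hNlt a' b' c' rfl ha' hb' hc' hcop' heq'

/-- Fermat's right triangle theorem, in the form `a⁴ - b⁴ = c²` has no
solutions with `b, c ≠ 0`. -/
lemma no_flt4m {a b c : ℤ} (hcop : IsCoprime a b) (hb : b ≠ 0) (hc : c ≠ 0) :
    a ^ 4 - b ^ 4 ≠ c ^ 2 := by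
  intro heq
  have hb4 : 0 < b ^ 4 := by positivity
  have hc2 : 0 < c ^ 2 := by positivity
  have ha : a ≠ 0 := by
    rintro rfl
    simp at heq
    nlinarith
  have habs : |a| ^ 4 - |b| ^ 4 = |c| ^ 2 := by
    have e1 : |a| ^ 4 = a ^ 4 := by rw [← abs_pow]; exact abs_of_nonneg (by positivity)
    have e2 : |b| ^ 4 = b ^ 4 := by rw [← abs_pow]; exact abs_of_nonneg (by positivity)
    have e3 : |c| ^ 2 = c ^ 2 := by rw [← abs_pow]; exact abs_of_nonneg (by positivity)
    rw [e1, e2, e3]; exact heq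
  have hcopabs : IsCoprime |a| |b| := by
    rcases abs_choice a with h1 | h1 <;> rcases abs_choice b with h2 | h2 <;>
      rw [h1, h2] <;> [skip; exact hcop.neg_right; exact hcop.neg_left;
        exact (hcop.neg_left).neg_right] <;> exact hcop
  exact no_flt4m_aux |a|.natAbs |a| |b| |c| rfl (abs_pos.mpr ha) (abs_pos.mpr hb)
    (abs_pos.mpr hc) hcopabs habs

set_option maxHeartbeats 1000000 in
lemma int_curve_points {n d Z : ℤ} (hd : 0 < d) (hcop : IsCoprime n d) (hZ : Z ≠ 0)
    (heq : Z ^ 2 = n * d * (n - d) * (n + d)) : False := by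
  have hn0 : n ≠ 0 := by rintro rfl; simp at heq; exact hZ heq
  have hnd : n - d ≠ 0 := by intro h0; rw [h0] at heq; simp at heq; exact hZ heq
  have hnd' : n + d ≠ 0 := by intro h0; rw [h0] at heq; simp at heq; exact hZ heq
  obtain ⟨u, v, huv⟩ := id hcop
  have c1 : IsCoprime n (n - d) := ⟨u + v, -v, by linear_combination huv⟩
  have c2 : IsCoprime n (n + d) := ⟨u - v, v, by linear_combination huv⟩
  have c3 : IsCoprime d (n - d) := ⟨u + v, u, by linear_combination huv⟩
  have c4 : IsCoprime d (n + d) := ⟨v - u, u, by linear_combination huv⟩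
  rcases Int.even_or_odd (n + d) with hev | hodd
  · -- n, d both odd
    have hdodd : Odd d := by
      rcases Int.even_or_odd d with he' | ho'
      · exfalso
        have hne : Even n := by
          rcases Int.even_or_odd n with he2 | ho2
          · exact he2
          · exfalso; obtain ⟨i, hi⟩ := he'; obtain ⟨j, hj⟩ := ho2
            obtain ⟨k, hk⟩ := hev; omega
        obtain ⟨i, hi⟩ := he'; obtain ⟨j, hj⟩ := hne
        have hunit : IsUnit (2 : ℤ) := hcop.isUnit_of_dvd' ⟨j, by omega⟩ ⟨i, by omega⟩
        rw [Int.isUnit_iff] at hunit; omega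
      · exact ho'
    have hnodd : Odd n := by
      obtain ⟨i, hi⟩ := hdodd; obtain ⟨k, hk⟩ := hev
      exact ⟨k - i - 1, by omega⟩
    obtain ⟨i, hi⟩ := hnodd
    obtain ⟨j, hj⟩ := hdodd
    obtain ⟨g, hg⟩ : ∃ g, n - d = 2 * g := ⟨i - j, by omega⟩
    obtain ⟨h, hh⟩ : ∃ h, n + d = 2 * h := ⟨i + j + 1, by omega⟩
    have hsum : g + h = n := by omega
    have hdiff : h - g = d := by omega
    have hWex : Even Z := by
      rcases Int.even_or_odd Z with he' | ho'
      · exact he'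
      · exfalso
        have h4 : Z ^ 2 = 2 * (n * d * g * h) + 2 * (n * d * g * h) := by
          rw [hg, hh] at heq; linear_combination heq
        exact (Int.not_odd_iff_even.mpr ⟨2 * (n * d * g * h), h4⟩) (ho'.pow)
    obtain ⟨W, hW⟩ := hWex
    have hW0 : W ≠ 0 := by rintro rfl; simp at hW; exact hZ hW
    have heqW : W ^ 2 = n * d * g * h := by
      have h4 : (W + W) ^ 2 = n * d * (2*g) * (2*h) := by rw [← hW, ← hg, ← hh]; exact heq
      nlinarith [h4]
    have c5 : IsCoprime n g := ⟨u + v, -(2 * v), by linear_combination huv + v * hg⟩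
    have c6 : IsCoprime n h := ⟨u - v, 2 * v, by linear_combination huv - v * hh⟩
    have c7 : IsCoprime d g := ⟨u + v, 2 * u, by linear_combination huv - u * hg⟩
    have c8 : IsCoprime d h := ⟨v - u, 2 * u, by linear_combination huv - u * hh⟩
    have c9 : IsCoprime g h := ⟨u - v, u + v, by linear_combination huv + u * hsum + v * hdiff⟩
    obtain ⟨D, hD0, hD⟩ := pos_sq_of_coprime ((hcop.symm.mul_right c7).mul_right c8)
      (show d * (n * g * h) = W ^ 2 from by linear_combination -heqW) hd
    obtain ⟨A, hA⟩ := Int.sq_of_isCoprime ((hcop.mul_right c5).mul_right c6)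
      (show n * (d * g * h) = W ^ 2 from by linear_combination -heqW)
    obtain ⟨G, hG⟩ := Int.sq_of_isCoprime ((c5.symm.mul_right c7.symm).mul_right c9)
      (show g * (n * d * h) = W ^ 2 from by linear_combination -heqW)
    obtain ⟨H, hH⟩ := Int.sq_of_isCoprime ((c6.symm.mul_right c8.symm).mul_right c9.symm)
      (show h * (n * d * g) = W ^ 2 from by linear_combination -heqW)
    have hW2 : 0 < W ^ 2 := by positivity
    have hprod : 0 < n * g * h := by
      by_contra hcon
      push_neg at hcon
      nlinarith [mul_le_mul_of_nonneg_right hcon hd.le]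
    have hgne : g ≠ 0 := by intro h0; rw [h0] at hg; omega
    have hhne : h ≠ 0 := by intro h0; rw [h0] at hh; omega
    have hDne : D ≠ 0 := hD0.ne'
    rcases hA with hA | hA <;> rcases hG with hG | hG <;> rcases hH with hH | hH
    · -- +++
      have hGne : G ≠ 0 := by rintro rfl; simp at hG; exact hgne hG
      have hAne : A ≠ 0 := by rintro rfl; simp at hA; exact hn0 hA
      have hcGH : IsCoprime H G := (coprime_of_sqs (by rw [← hG, ← hH]; exact c9)).symm
      rw [hA, hG, hH] at hsum
      rw [hG, hH, hD] at hdiff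
      exact no_flt4m hcGH hGne (mul_ne_zero hDne hAne)
        (by linear_combination (H^2 + G^2) * hdiff + D^2 * hsum)
    · -- ++- : h = -H^2 : h - g = d > 0 but h ≤ 0 ≤ g
      rw [hG, hH] at hdiff
      linarith [sq_nonneg G, sq_nonneg H, hd]
    · -- +-+ : product ≤ 0
      rw [hA, hG, hH] at hprod
      nlinarith [sq_nonneg (A*G*H), hprod]
    · -- +-- : n = g + h ≤ 0 but n > 0
      have hAne : A ≠ 0 := by rintro rfl; simp at hA; exact hn0 hA
      have hA2 : 0 < A ^ 2 := by positivity
      rw [hA, hG, hH] at hsum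
      linarith [sq_nonneg G, sq_nonneg H, hA2]
    · -- -++ : n < 0, but n = g + h ≥ 0
      have hAne : A ≠ 0 := by rintro rfl; simp at hA; exact hn0 hA
      have hA2 : 0 < A ^ 2 := by positivity
      rw [hA, hG, hH] at hsum
      linarith [sq_nonneg G, sq_nonneg H, hA2]
    · -- -+- : g ≥ 0 ≥ h but h - g = d > 0
      rw [hG, hH] at hdiff
      linarith [sq_nonneg G, sq_nonneg H, hd]
    · -- --+
      have hHne : H ≠ 0 := by rintro rfl; simp at hH; exact hhne hH
      have hAne : A ≠ 0 := by rintro rfl; simp at hA; exact hn0 hA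
      have hcGH : IsCoprime G H :=
        coprime_of_sqs (by rw [← neg_neg (G^2), ← hG, ← hH]; exact c9.neg_left)
      rw [hA, hG, hH] at hsum
      rw [hG, hH, hD] at hdiff
      exact no_flt4m hcGH hHne (mul_ne_zero hDne hAne)
        (by linear_combination -(G^2 + H^2) * hsum + A^2 * hdiff)
    · -- --- : product ≤ 0
      rw [hA, hG, hH] at hprod
      nlinarith [sq_nonneg (A*G*H), hprod]
  · -- n + d odd
    obtain ⟨e, he⟩ := hodd
    have c5 : IsCoprime (n - d) (n + d) :=
      ⟨-(e * (u - v)), 1 - e * (u + v), by linear_combination he - 2 * e * huv⟩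
    obtain ⟨D, hD0, hD⟩ := pos_sq_of_coprime ((hcop.symm.mul_right c3).mul_right c4)
      (show d * (n * (n - d) * (n + d)) = Z ^ 2 from by linear_combination -heq) hd
    obtain ⟨A, hA⟩ := Int.sq_of_isCoprime ((hcop.mul_right c1).mul_right c2)
      (show n * (d * (n - d) * (n + d)) = Z ^ 2 from by linear_combination -heq)
    obtain ⟨E, hE⟩ := Int.sq_of_isCoprime ((c1.symm.mul_right c3.symm).mul_right c5)
      (show (n - d) * (n * d * (n + d)) = Z ^ 2 from by linear_combination -heq)
    obtain ⟨F, hF⟩ := Int.sq_of_isCoprime ((c2.symm.mul_right c4.symm).mul_right c5.symm)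
      (show (n + d) * (n * d * (n - d)) = Z ^ 2 from by linear_combination -heq)
    have hZ2 : 0 < Z ^ 2 := by positivity
    have hprod : 0 < n * (n - d) * (n + d) := by
      by_contra hcon
      push_neg at hcon
      nlinarith [mul_le_mul_of_nonneg_right hcon hd.le]
    have hDne : D ≠ 0 := hD0.ne'
    rcases hA with hA | hA <;> rcases hE with hE | hE <;> rcases hF with hF | hF
    · -- +++
      have hAne : A ≠ 0 := by rintro rfl; simp at hA; exact hn0 hA
      have hEne : E ≠ 0 := by rintro rfl; simp at hE; exact hnd hE
      have hFne : F ≠ 0 := by rintro rfl; simp at hF; exact hnd' hF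
      have hcAD : IsCoprime A D := coprime_of_sqs (by rw [← hA, ← hD]; exact hcop)
      rw [hA, hD] at hE hF
      exact no_flt4m hcAD hDne (mul_ne_zero hEne hFne)
        (by linear_combination (A^2 + D^2) * hE + E^2 * hF)
    · -- ++- : n + d = -F² ≤ 0 but n ≥ 0, d > 0
      have hAne : A ≠ 0 := by rintro rfl; simp at hA; exact hn0 hA
      have hA2 : 0 < A ^ 2 := by positivity
      linarith [sq_nonneg F, hA2, hd]
    · -- +-+ : product ≤ 0
      rw [hE, hF, hA] at hprod
      nlinarith [sq_nonneg (A*E*F), hprod]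
    · -- +-- : n + d ≤ 0
      have hAne : A ≠ 0 := by rintro rfl; simp at hA; exact hn0 hA
      have hA2 : 0 < A ^ 2 := by positivity
      linarith [sq_nonneg F, hA2, hd]
    · -- -++ : n - d = E² ≥ 0 but n < 0 < d
      have hAne : A ≠ 0 := by rintro rfl; simp at hA; exact hn0 hA
      have hA2 : 0 < A ^ 2 := by positivity
      linarith [sq_nonneg E, hA2, hd]
    · -- -+-
      have hAne : A ≠ 0 := by rintro rfl; simp at hA; exact hn0 hA
      have hA2 : 0 < A ^ 2 := by positivity
      linarith [sq_nonneg E, hA2, hd]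
    · -- --+
      have hAne : A ≠ 0 := by rintro rfl; simp at hA; exact hn0 hA
      have hEne : E ≠ 0 := by rintro rfl; simp at hE; exact hnd hE
      have hFne : F ≠ 0 := by rintro rfl; simp at hF; exact hnd' hF
      have hcDA : IsCoprime D A :=
        coprime_of_sqs (by rw [← neg_neg (A^2), ← hA, ← hD]; exact hcop.symm.neg_right)
      rw [hA, hD] at hE hF
      exact no_flt4m hcDA hAne (mul_ne_zero hEne hFne)
        (by linear_combination -F^2 * hE + (A^2 + D^2) * hF)
    · -- --- : product ≤ 0
      rw [hE, hF, hA] at hprod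
      nlinarith [sq_nonneg (A*E*F), hprod]

/-- The rational points on the elliptic curve `y² = x³ - x` (the modular curve
`X₁(4,8)`) consist exactly of the point at infinity and the three `2`-torsion points
`(0,0)`, `(1,0)`, `(-1,0)`. -/
theorem X1_4_8_rational_points :
    ∀ x y : ℚ, y ^ 2 = x ^ 3 - x ↔
      (x, y) = (0, 0) ∨ (x, y) = (1, 0) ∨ (x, y) = (-1, 0) := by
  intro x y
  constructor
  · intro h
    by_cases hy : y = 0
    · subst hy
      have h0 : x * (x - 1) * (x + 1) = 0 := by linear_combination -h
      rcases mul_eq_zero.mp h0 with h1 | h1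
      · rcases mul_eq_zero.mp h1 with h2 | h2
        · exact Or.inl (by rw [h2])
        · exact Or.inr (Or.inl (by rw [show x = 1 from by linarith]))
      · exact Or.inr (Or.inr (by rw [show x = -1 from by linarith]))
    · exfalso
      set n : ℤ := x.num with hn
      set d : ℤ := (x.den : ℤ) with hdd
      have hd : 0 < d := by rw [hdd]; exact_mod_cast x.pos
      have hdQ : ((d : ℚ)) ≠ 0 := by positivity
      have hxn : x * (d : ℚ) = (n : ℚ) := by
        rw [hn, hdd]
        push_cast
        rw [mul_comm]
        exact_mod_cast Rat.den_mul_eq_num x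
      have key : (y * (d:ℚ)^2)^2 = ((n*d*(n-d)*(n+d) : ℤ) : ℚ) := by
        push_cast
        linear_combination ((d:ℚ))^4 * h +
          ((d:ℚ)*((x*(d:ℚ))^2 + x*(d:ℚ)*(n:ℚ) + (n:ℚ)^2) - (d:ℚ)^3) * hxn
      set Y : ℚ := y * (d:ℚ)^2 with hY
      have hYden : Y.den = 1 := by
        have h1 : (Y ^ 2).den = 1 := by rw [key]; exact Rat.den_intCast _
        rw [Rat.den_pow] at h1
        have := Y.pos
        nlinarith [h1, this]
      have hYnum : ((Y.num : ℚ)) = Y := by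
        conv_rhs => rw [← Rat.num_div_den Y]
        rw [hYden]
        simp
      have hZint : (Y.num) ^ 2 = n*d*(n-d)*(n+d) := by
        have h2 : ((Y.num : ℚ)) ^ 2 = ((n*d*(n-d)*(n+d) : ℤ) : ℚ) := by rw [hYnum]; exact key
        exact_mod_cast h2
      have hYne : Y.num ≠ 0 := by
        rw [Rat.num_ne_zero]
        exact mul_ne_zero hy (by positivity)
      have hcop : IsCoprime n d := by
        rw [Int.isCoprime_iff_gcd_eq_one]
        exact_mod_cast x.reduced
      exact int_curve_points hd hcop hYne hZint
  · rintro (h | h | h) <;>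
      simp only [Prod.mk.injEq] at h <;> obtain ⟨h1, h2⟩ := h <;> subst h1 <;> subst h2 <;>
      norm_num
end
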